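/- arXiv:1712.07368 — 2 statements merged into one kernel-verified Lean document; each statement's English description precedes it below -/
import Mathlib

section
/- Let $R$ be a Dedekind domain and $\mathfrak{a}$ a non-zero fractional ideal of $R$. Then for every finitely generated $R$-module $M$, one has $\mathrm{Fitt}_R(M) = \mathrm{Fitt}_R(\mathfrak{a} \otimes_R M)$. -/
/-- The zeroth Fitting ideal of an `R`-module `M`: for each surjection
`π : Rⁿ → M`, take the ideal generated by determinants of all `n × n` matrices whose
columns lie in `ker π` (equivalently, the `n × n` minors of any presentation matrix
with respect to `π`), and take the supremum over all such surjections. -/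
def fittingIdeal (R : Type*) [CommRing R] (M : Type*) [AddCommGroup M] [Module R M] :
    Ideal R :=
  ⨆ (n : ℕ), ⨆ (π : (Fin n → R) →ₗ[R] M), ⨆ (_ : Function.Surjective π),
    Ideal.span {d : R | ∃ A : Matrix (Fin n) (Fin n) R,
      (∀ j, π (fun i => A i j) = 0) ∧ d = A.det}

theorem fittingIdeal_le_of_maps {R K : Type*} [CommRing R] [CommRing K] [Algebra R K]
    (hinj : Function.Injective (algebraMap R K))
    {M₁ M₂ : Type*} [AddCommGroup M₁] [Module R M₁] [AddCommGroup M₂] [Module R M₂]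
    (k : ℕ) (g : Fin k → (M₁ →ₗ[R] M₂)) (c : Matrix (Fin k) (Fin k) R)
    (u v : Fin k → K) (hc : ∀ i j, algebraMap R K (c i j) = v i * u j)
    (huv : ∑ i, u i * v i = 1)
    (hsurj : ∀ m₂ : M₂, ∃ m : Fin k → M₁, ∑ i, g i (m i) = m₂)
    (hrel : ∀ j (m : M₁), ∑ i, ((if i = j then (1:R) else 0) - c i j) • g i m = 0) :
    fittingIdeal R M₁ ≤ fittingIdeal R M₂ := by
  refine iSup_le fun n => iSup_le fun π => iSup_le fun hπ => Ideal.span_le.2 ?_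
  rintro d ⟨A, hA, rfl⟩
  classical
  set f := algebraMap R K with hf
  -- the combined surjection onto M₂, indexed by Fin k × Fin n
  set ρ₀ : ((Fin k × Fin n) → R) →ₗ[R] M₂ :=
    ∑ i, (g i).comp (π.comp (LinearMap.funLeft R R (fun s => (i, s)))) with hρ₀
  have ρ₀_apply : ∀ x, ρ₀ x = ∑ i, g i (π (fun s => x (i, s))) := by
    intro x
    simp [hρ₀, LinearMap.sum_apply, LinearMap.funLeft_apply]
    rfl
  set σ : Fin (k * n) ≃ Fin k × Fin n := finProdFinEquiv.symm with hσ
  set ρ : (Fin (k * n) → R) →ₗ[R] M₂ := ρ₀.comp (LinearMap.funLeft R R σ.symm) with hρ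
  have ρ_apply : ∀ x, ρ x = ρ₀ (fun p => x (σ.symm p)) := fun x => rfl
  have hρsurj : Function.Surjective ρ := by
    intro m₂
    obtain ⟨m, hm⟩ := hsurj m₂
    choose y hy using fun i => hπ (m i)
    refine ⟨fun i' => y (σ i').1 (σ i').2, ?_⟩
    rw [ρ_apply, ρ₀_apply]
    simp only [Equiv.apply_symm_apply]
    rw [← hm]
    exact Finset.sum_congr rfl fun i _ => by rw [show (fun s => y i s) = y i from rfl, hy]
  -- the presentation matrix
  set B : Matrix (Fin k × Fin n) (Fin k × Fin n) R :=
    fun p q => c p.1 q.1 * A p.2 q.2 +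
      ((if p.1 = q.1 then 1 else 0) - c p.1 q.1) * (if p.2 = q.2 then 1 else 0) with hB
  have hBcol : ∀ q, ρ₀ (fun p => B p q) = 0 := by
    intro q
    rw [ρ₀_apply]
    have h1 : ∀ i, π (fun s => B (i, s) q) =
        ((if i = q.1 then (1:R) else 0) - c i q.1) • π (Pi.single q.2 1) := by
      intro i
      have hfun : (fun s => B (i, s) q) =
          (c i q.1 • (fun s => A s q.2) : Fin n → R) +
          ((if i = q.1 then (1:R) else 0) - c i q.1) • (Pi.single q.2 (1:R) : Fin n → R) := by
        funext s
        simp [hB, Pi.single_apply, smul_eq_mul]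
      rw [hfun, map_add, map_smul, map_smul, hA q.2, smul_zero, zero_add]
    calc (∑ i, g i (π fun s => B (i, s) q))
        = ∑ i, ((if i = q.1 then (1:R) else 0) - c i q.1) • g i (π (Pi.single q.2 1)) := by
          refine Finset.sum_congr rfl fun i _ => ?_
          rw [h1 i, map_smul]
      _ = 0 := hrel q.1 _
  -- determinant computation
  have hdet : B.det = A.det := by
    apply hinj
    rw [RingHom.map_det, RingHom.map_det]
    set P : Matrix (Fin k × Fin n) (Fin n) K :=
      fun p t => v p.1 * ((A.map f) p.2 t - if p.2 = t then 1 else 0) with hP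
    set Q : Matrix (Fin n) (Fin k × Fin n) K :=
      fun t q => u q.1 * (if t = q.2 then 1 else 0) with hQ
    have hBmap : B.map f = 1 + P * Q := by
      ext p q
      have hPQ : (P * Q) p q = v p.1 * u q.1 * ((A.map f) p.2 q.2 - if p.2 = q.2 then 1 else 0) := by
        rw [Matrix.mul_apply]; simp only [hP, hQ, mul_ite, mul_zero, mul_one]
        rw [Finset.sum_ite_eq' Finset.univ q.2
          (fun t => v p.1 * ((A.map f) p.2 t - if p.2 = t then 1 else 0) * u q.1)]
        simp only [Finset.mem_univ, if_true]
        ring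
      have hone : ((1 : Matrix (Fin k × Fin n) (Fin k × Fin n) K) p q) =
          (if p.1 = q.1 then (1:K) else 0) * (if p.2 = q.2 then 1 else 0) := by
        rw [Matrix.one_apply]
        by_cases h1 : p.1 = q.1 <;> by_cases h2 : p.2 = q.2 <;>
          simp [h1, h2, Prod.ext_iff]
      rw [Matrix.add_apply, hPQ, hone, Matrix.map_apply]
      simp only [hB, map_add, map_mul, map_sub, hc]
      rw [show f (if p.1 = q.1 then (1:R) else 0) = (if p.1 = q.1 then (1:K) else 0) by
        split <;> simp,
        show f (if p.2 = q.2 then (1:R) else 0) = (if p.2 = q.2 then (1:K) else 0) by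
        split <;> simp]
      rw [Matrix.map_apply]
      ring
    have hQP : 1 + Q * P = A.map f := by
      ext t t'
      have hsum : (Q * P) t t' = (A.map f) t t' - if t = t' then 1 else 0 := by
        rw [Matrix.mul_apply]; simp only [hP, hQ, Fintype.sum_prod_type]
        have hin : ∀ j : Fin k, (∑ s : Fin n,
            (u j * if t = s then (1:K) else 0) *
              (v j * ((A.map f) s t' - if s = t' then 1 else 0)))
            = (u j * v j) * ((A.map f) t t' - if t = t' then 1 else 0) := by
          intro j
          rw [Finset.sum_eq_single t]
          · simp only [eq_self_iff_true, if_true, mul_one]; ring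
          · intro s _ hs
            rw [if_neg (Ne.symm hs)]
            ring
          · intro h; exact absurd (Finset.mem_univ t) h
        rw [Finset.sum_congr rfl (fun j _ => hin j), ← Finset.sum_mul, huv, one_mul]
      rw [Matrix.add_apply, hsum, Matrix.one_apply]
      ring
    rw [RingHom.mapMatrix_apply, RingHom.mapMatrix_apply, hBmap,
      Matrix.det_one_add_mul_comm, hQP]
  -- conclude
  have hmem : A.det ∈ Ideal.span {d : R | ∃ A₂ : Matrix (Fin (k*n)) (Fin (k*n)) R,
      (∀ j, ρ (fun i => A₂ i j) = 0) ∧ d = A₂.det} := by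
    refine Ideal.subset_span ⟨B.submatrix σ σ, ?_, ?_⟩
    · intro j'
      rw [ρ_apply]
      have : (fun p => Matrix.submatrix B σ σ (σ.symm p) j') = fun p => B p (σ j') := by
        funext p; simp [Matrix.submatrix_apply]
      rw [this]
      exact hBcol (σ j')
    · rw [Matrix.det_submatrix_equiv_self, hdet]
  exact Submodule.mem_iSup_of_mem (k * n)
    (Submodule.mem_iSup_of_mem ρ (Submodule.mem_iSup_of_mem hρsurj hmem))


-- auxiliary scalar identity
theorem aux_sum {K : Type*} [CommRing K] {k : ℕ} (w z : Fin k → K)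
    (h : ∑ i, z i * w i = 1) (j : Fin k) :
    ∑ i, ((if i = j then (1:K) else 0) - z i * w j) * w i = 0 := by
  simp only [sub_mul, ite_mul, one_mul, zero_mul]
  rw [Finset.sum_sub_distrib, Finset.sum_ite_eq' Finset.univ j w]
  simp only [Finset.mem_univ, if_true]
  have h2 : ∑ i, z i * w j * w i = w j * ∑ i, z i * w i := by
    rw [Finset.mul_sum]
    exact Finset.sum_congr rfl fun i _ => by ring
  rw [h2, h, mul_one, sub_self]

/-- "Division" by an element: if `b * x` is integral for every `x ∈ N`, then
multiplication by `b` gives an `R`-linear map `N →ₗ[R] R`. -/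
noncomputable def divMap {R K : Type*} [CommRing R] [CommRing K] [Algebra R K]
    (hinj : Function.Injective (algebraMap R K)) {N : Submodule R K} {b : K}
    (hb : ∀ x ∈ N, ∃ r : R, algebraMap R K r = b * x) : N →ₗ[R] R where
  toFun x := (hb x x.2).choose
  map_add' x y := by
    apply hinj
    rw [map_add, (hb _ (x + y).2).choose_spec, (hb _ x.2).choose_spec, (hb _ y.2).choose_spec,
      Submodule.coe_add, mul_add]
  map_smul' r x := by
    apply hinj
    rw [RingHom.id_apply, (hb _ (r • x).2).choose_spec, SetLike.val_smul, Algebra.smul_def,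
      smul_eq_mul, map_mul, (hb _ x.2).choose_spec]
    ring

theorem divMap_spec {R K : Type*} [CommRing R] [CommRing K] [Algebra R K]
    (hinj : Function.Injective (algebraMap R K)) {N : Submodule R K} {b : K}
    (hb : ∀ x ∈ N, ∃ r : R, algebraMap R K r = b * x) (x : N) :
    algebraMap R K (divMap hinj hb x) = b * x :=
  (hb x x.2).choose_spec


theorem gen_decomp (R : Type*) [CommRing R] [IsDedekindDomain R]
    (a : FractionalIdeal (nonZeroDivisors R) (FractionRing R)) (ha : a ≠ 0) :
    ∃ (k : ℕ) (α β : Fin k → FractionRing R),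
      (∀ i, α i ∈ (a : Submodule R (FractionRing R))) ∧
      (∀ i, β i ∈ ((a⁻¹ : FractionalIdeal (nonZeroDivisors R) (FractionRing R)) :
        Submodule R (FractionRing R))) ∧
      ∑ i, α i * β i = 1 := by
  classical
  have hmul : a * a⁻¹ = 1 := mul_inv_cancel₀ ha
  have h1mem : (1 : FractionRing R) ∈ ((a : Submodule R (FractionRing R)) *
      ((a⁻¹ : FractionalIdeal (nonZeroDivisors R) (FractionRing R)) :
        Submodule R (FractionRing R))) := by
    rw [← FractionalIdeal.coe_mul, hmul, FractionalIdeal.coe_one, Submodule.one_eq_range]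
    exact ⟨1, by simp [Algebra.linearMap_apply]⟩
  refine Submodule.mul_induction_on
    (C := fun x => ∃ (k : ℕ) (α β : Fin k → FractionRing R),
      (∀ i, α i ∈ (a : Submodule R (FractionRing R))) ∧
      (∀ i, β i ∈ ((a⁻¹ : FractionalIdeal (nonZeroDivisors R) (FractionRing R)) :
        Submodule R (FractionRing R))) ∧
      ∑ i, α i * β i = x) h1mem ?_ ?_
  · intro m hm y hy
    exact ⟨1, fun _ => m, fun _ => y, fun _ => hm, fun _ => hy, by simp⟩
  · rintro x y ⟨k₁, α₁, β₁, hα₁, hβ₁, h₁⟩ ⟨k₂, α₂, β₂, hα₂, hβ₂, h₂⟩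
    refine ⟨k₁ + k₂, Fin.append α₁ α₂, Fin.append β₁ β₂, ?_, ?_, ?_⟩
    · intro i
      refine Fin.addCases (fun j => ?_) (fun j => ?_) i
      · rw [Fin.append_left]; exact hα₁ j
      · rw [Fin.append_right]; exact hα₂ j
    · intro i
      refine Fin.addCases (fun j => ?_) (fun j => ?_) i
      · rw [Fin.append_left]; exact hβ₁ j
      · rw [Fin.append_right]; exact hβ₂ j
    · rw [Fin.sum_univ_add]
      simp only [Fin.append_left, Fin.append_right]
      rw [h₁, h₂]


open TensorProduct in
/-- Over a Dedekind domain `R`, tensoring with a non-zero fractional ideal `𝔞` does not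
change zeroth Fitting ideals of finitely generated modules. -/
theorem fittingIdeal_tensor_fractionalIdeal (R : Type*) [CommRing R] [IsDedekindDomain R]
    (a : FractionalIdeal (nonZeroDivisors R) (FractionRing R)) (ha : a ≠ 0)
    (M : Type*) [AddCommGroup M] [Module R M] [Module.Finite R M] :
    fittingIdeal R M =
      fittingIdeal R ((a : Submodule R (FractionRing R)) ⊗[R] M) := by
  classical
  have hinj : Function.Injective (algebraMap R (FractionRing R)) :=
    IsFractionRing.injective R (FractionRing R)
  have hmul : a * a⁻¹ = 1 := mul_inv_cancel₀ ha
  have hprod : ∀ x ∈ (a : Submodule R (FractionRing R)),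
      ∀ y ∈ ((a⁻¹ : FractionalIdeal (nonZeroDivisors R) (FractionRing R)) :
        Submodule R (FractionRing R)),
      ∃ r : R, algebraMap R (FractionRing R) r = x * y := by
    intro x hx y hy
    have hxy : x * y ∈ ((a : Submodule R (FractionRing R)) *
        ((a⁻¹ : FractionalIdeal (nonZeroDivisors R) (FractionRing R)) :
          Submodule R (FractionRing R))) := Submodule.mul_mem_mul hx hy
    rw [← FractionalIdeal.coe_mul, hmul, FractionalIdeal.coe_one, Submodule.one_eq_range] at hxy
    obtain ⟨r, hr⟩ := hxy
    exact ⟨r, hr⟩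
  obtain ⟨k, α, β, hα, hβ, hαβ⟩ := gen_decomp R a ha
  have hβα : ∑ i, β i * α i = 1 := by
    rw [← hαβ]; exact Finset.sum_congr rfl fun i _ => mul_comm _ _
  -- the relation matrix
  have hcex : ∀ i j : Fin k, ∃ r : R, algebraMap R (FractionRing R) r = β i * α j := fun i j => by
    obtain ⟨r, hr⟩ := hprod (α j) (hα j) (β i) (hβ i)
    exact ⟨r, by rw [hr, mul_comm]⟩
  choose c hc using hcex
  set γ : Fin k → ((a : Submodule R (FractionRing R))) := fun i => ⟨α i, hα i⟩ with hγ
  have hγc : ∀ i, ((γ i : FractionRing R)) = α i := fun i => rfl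
  apply le_antisymm
  · -- Fitt M ≤ Fitt (a ⊗ M)
    refine fittingIdeal_le_of_maps hinj k
      (fun i => TensorProduct.mk R (a : Submodule R (FractionRing R)) M (γ i))
      (Matrix.of fun i j => c i j) α β (fun i j => hc i j) hαβ ?_ ?_
    · -- joint surjectivity
      intro t
      induction t using TensorProduct.induction_on with
      | zero => exact ⟨0, by simp⟩
      | tmul x m₀ =>
          have hex : ∀ i, ∃ r : R, algebraMap R (FractionRing R) r = (x : FractionRing R) * β i :=
            fun i => hprod x x.2 (β i) (hβ i)
          choose r hr using hex
          refine ⟨fun i => r i • m₀, ?_⟩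
          have h1 : ∀ i : Fin k,
              (TensorProduct.mk R (a : Submodule R (FractionRing R)) M (γ i)) (r i • m₀)
              = (r i • γ i) ⊗ₜ[R] m₀ := by
            intro i
            rw [TensorProduct.mk_apply, TensorProduct.tmul_smul, TensorProduct.smul_tmul']
          rw [Finset.sum_congr rfl (fun i _ => h1 i), ← TensorProduct.sum_tmul]
          congr 1
          apply Subtype.ext
          rw [AddSubmonoidClass.coe_finset_sum]
          have h2 : ∀ i : Fin k,
              ((r i • γ i : ((a : Submodule R (FractionRing R)))) : FractionRing R)
              = (x : FractionRing R) * (α i * β i) := by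
            intro i
            rw [SetLike.val_smul, Algebra.smul_def, hr i, hγc]
            ring
          rw [Finset.sum_congr rfl (fun i _ => h2 i), ← Finset.mul_sum, hαβ, mul_one]
      | add t₁ t₂ ih₁ ih₂ =>
          obtain ⟨m₁, hm₁⟩ := ih₁
          obtain ⟨m₂, hm₂⟩ := ih₂
          refine ⟨m₁ + m₂, ?_⟩
          simp only [Pi.add_apply, map_add]
          rw [Finset.sum_add_distrib, hm₁, hm₂]
    · -- relations
      intro j m
      have h1 : ∀ i : Fin k,
          ((if i = j then (1:R) else 0) - Matrix.of (fun i j => c i j) i j) •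
            (TensorProduct.mk R (a : Submodule R (FractionRing R)) M (γ i)) m
          = (((if i = j then (1:R) else 0) - c i j) •
              γ i) ⊗ₜ[R] m := by
        intro i
        rw [TensorProduct.mk_apply, TensorProduct.smul_tmul']
        rfl
      rw [Finset.sum_congr rfl (fun i _ => h1 i), ← TensorProduct.sum_tmul]
      have hz : (∑ i, ((if i = j then (1:R) else 0) - c i j) •
          γ i) = 0 := by
        apply Subtype.ext
        rw [AddSubmonoidClass.coe_finset_sum]
        have h2 : ∀ i : Fin k,
            ((((if i = j then (1:R) else 0) - c i j) •
              γ i : ((a : Submodule R (FractionRing R)))) : FractionRing R)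
            = ((if i = j then (1 : FractionRing R) else 0) - β i * α j) * α i := by
          intro i
          rw [SetLike.val_smul, Algebra.smul_def, map_sub, hc, hγc]
          congr 2
          split <;> simp
        rw [Finset.sum_congr rfl (fun i _ => h2 i), aux_sum α β hβα j]
        rfl
      rw [hz, TensorProduct.zero_tmul]
  · -- Fitt (a ⊗ M) ≤ Fitt M
    have hb : ∀ i : Fin k, ∀ x ∈ (a : Submodule R (FractionRing R)),
        ∃ r : R, algebraMap R (FractionRing R) r = β i * x := by
      intro i x hx
      obtain ⟨r, hr⟩ := hprod x hx (β i) (hβ i)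
      exact ⟨r, by rw [hr, mul_comm]⟩
    set d : Fin k → ((a : Submodule R (FractionRing R)) →ₗ[R] R) :=
      fun i => divMap hinj (hb i) with hd
    set φ : Fin k → (((a : Submodule R (FractionRing R)) ⊗[R] M) →ₗ[R] M) :=
      fun i => (TensorProduct.lid R M).toLinearMap ∘ₗ
        TensorProduct.map (d i) LinearMap.id with hφ
    have hφ_apply : ∀ (i : Fin k) (x : (a : Submodule R (FractionRing R))) (m : M),
        φ i (x ⊗ₜ[R] m) = (d i x) • m := by
      intro i x m
      simp [hφ, TensorProduct.map_tmul, TensorProduct.lid_tmul]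
    refine fittingIdeal_le_of_maps hinj k φ (Matrix.of fun i j => c j i) β α
      (fun i j => (hc j i).trans (mul_comm _ _)) hβα ?_ ?_
    · -- joint surjectivity
      intro m
      refine ⟨fun i => (γ i) ⊗ₜ[R] m, ?_⟩
      rw [Finset.sum_congr rfl (fun i _ => hφ_apply i _ m), ← Finset.sum_smul]
      have h1 : (∑ i, d i (γ i)) = 1 := by
        apply hinj
        rw [map_sum, map_one]
        rw [Finset.sum_congr rfl (fun i _ => divMap_spec hinj (hb i) _), hβα]
      rw [h1, one_smul]
    · -- relations
      intro j t
      induction t using TensorProduct.induction_on with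
      | zero => simp
      | tmul x m =>
          have h1 : ∀ i : Fin k,
              ((if i = j then (1:R) else 0) - Matrix.of (fun i j => c j i) i j) • φ i (x ⊗ₜ[R] m)
              = (((if i = j then (1:R) else 0) - c j i) * d i x) • m := by
            intro i
            rw [hφ_apply, smul_smul]
            rfl
          rw [Finset.sum_congr rfl (fun i _ => h1 i), ← Finset.sum_smul]
          have h2 : (∑ i, ((if i = j then (1:R) else 0) - c j i) * d i x) = 0 := by
            apply hinj
            rw [map_sum, map_zero]
            have h3 : ∀ i : Fin k,
                algebraMap R (FractionRing R) (((if i = j then (1:R) else 0) - c j i) * d i x)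
                = ((if i = j then (1 : FractionRing R) else 0) - α i * β j) * (β i * (x : FractionRing R)) := by
              intro i
              rw [map_mul, map_sub, hc, divMap_spec hinj (hb i)]
              congr 2
              · split <;> simp
              · ring
            rw [Finset.sum_congr rfl (fun i _ => h3 i)]
            have h4 : ∀ i : Fin k,
                ((if i = j then (1 : FractionRing R) else 0) - α i * β j) * (β i * (x : FractionRing R))
                = (((if i = j then (1 : FractionRing R) else 0) - α i * β j) * β i) * (x : FractionRing R) := by
              intro i; ring
            rw [Finset.sum_congr rfl (fun i _ => h4 i), ← Finset.sum_mul,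
              aux_sum β α hαβ j, zero_mul]
          rw [h2, zero_smul]
      | add t₁ t₂ ih₁ ih₂ =>
          have : ∀ i : Fin k,
              ((if i = j then (1:R) else 0) - Matrix.of (fun i j => c j i) i j) • φ i (t₁ + t₂)
              = ((if i = j then (1:R) else 0) - Matrix.of (fun i j => c j i) i j) • φ i t₁ +
                ((if i = j then (1:R) else 0) - Matrix.of (fun i j => c j i) i j) • φ i t₂ := by
            intro i; rw [map_add, smul_add]
          rw [Finset.sum_congr rfl (fun i _ => this i), Finset.sum_add_distrib, ih₁, ih₂, add_zero]
end

section
/- Let $p$ be a prime and let $\Lambda = \{ \begin{pmatrix} a & b \\ c & d \end{pmatrix} \in M_{2\times 2}(\mathbb{Z}_p) : b \equiv 0 \bmod p \}$. Let $M$ (respectively $N$) be $\mathbb{Z}_p/p\mathbb{Z}_p$ with $\Lambda$ acting via $\lambda \cdot m = \bar{a} m$ (respectively $\lambda \cdot n = \bar{d} n$) for $\lambda = \begin{pmatrix} a & b \\ c & d \end{pmatrix}$. Then right multiplication by $\begin{pmatrix} 0 & p \\ 1 & 0 \end{pmatrix}$ gives a short exact sequence of left $\Lambda$-modules $0 \to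 \Lambda \to \Lambda \to M \oplus N \to 0$. -/
variable (p : ℕ) [Fact p.Prime]

/-- The hereditary order `Λ ⊆ M₂(ℤ_p)` of matrices whose upper-right entry is
divisible by `p`. -/
def Lam : Subring (Matrix (Fin 2) (Fin 2) ℤ_[p]) where
  carrier := {A | (p : ℤ_[p]) ∣ A 0 1}
  zero_mem' := by simp
  one_mem' := by simp [Matrix.one_apply]
  add_mem' := by
    intro A B hA hB
    simpa using dvd_add hA hB
  neg_mem' := by
    intro A hA
    simpa using hA.neg_right
  mul_mem' := by
    intro A B hA hB
    have : (A * B) 0 1 = A 0 0 * B 0 1 + A 0 1 * B 1 1 := by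
      simp [Matrix.mul_apply, Fin.sum_univ_two]
    simpa [Set.mem_setOf_eq, this] using dvd_add (hB.mul_left _) (hA.mul_right _)

/-- The ring homomorphism `Λ → ℤ/p` reading off the upper-left entry modulo `p`. -/
noncomputable def phiM : Lam p →+* ZMod p where
  toFun A := PadicInt.toZMod (A.1 0 0)
  map_one' := by simp [Matrix.one_apply]
  map_zero' := by simp
  map_add' A B := by simp [Subring.coe_add]
  map_mul' A B := by
    have h : ((A : Matrix (Fin 2) (Fin 2) ℤ_[p]) * B) 0 0
        = A.1 0 0 * B.1 0 0 + A.1 0 1 * B.1 1 0 := by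
      simp [Matrix.mul_apply, Fin.sum_univ_two]
    obtain ⟨c, hc⟩ := A.2
    show PadicInt.toZMod (((A : Matrix (Fin 2) (Fin 2) ℤ_[p]) * B) 0 0) = _
    rw [h, hc]
    simp [ZMod.natCast_self]

/-- The ring homomorphism `Λ → ℤ/p` reading off the lower-right entry modulo `p`. -/
noncomputable def phiN : Lam p →+* ZMod p where
  toFun A := PadicInt.toZMod (A.1 1 1)
  map_one' := by simp [Matrix.one_apply]
  map_zero' := by simp
  map_add' A B := by simp [Subring.coe_add]
  map_mul' A B := by
    have h : ((A : Matrix (Fin 2) (Fin 2) ℤ_[p]) * B) 1 1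
        = A.1 1 0 * B.1 0 1 + A.1 1 1 * B.1 1 1 := by
      simp [Matrix.mul_apply, Fin.sum_univ_two]
    obtain ⟨c, hc⟩ := B.2
    show PadicInt.toZMod (((A : Matrix (Fin 2) (Fin 2) ℤ_[p]) * B) 1 1) = _
    rw [h, hc]
    simp [ZMod.natCast_self]

/-- `M = ℤ_p/pℤ_p` with `Λ` acting through the upper-left entry. -/
def Mmod := ZMod p

/-- `N = ℤ_p/pℤ_p` with `Λ` acting through the lower-right entry. -/
def Nmod := ZMod p

instance : AddCommGroup (Mmod p) := inferInstanceAs (AddCommGroup (ZMod p))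
instance : AddCommGroup (Nmod p) := inferInstanceAs (AddCommGroup (ZMod p))
noncomputable instance : Module (Lam p) (Mmod p) := Module.compHom (ZMod p) (phiM p)
noncomputable instance : Module (Lam p) (Nmod p) := Module.compHom (ZMod p) (phiN p)

/-- The matrix `(0 p; 1 0)` as an element of `Λ`. -/
noncomputable def eMat : Lam p :=
  ⟨!![0, (p : ℤ_[p]); 1, 0], by
    show (p : ℤ_[p]) ∣ !![0, (p : ℤ_[p]); 1, 0] 0 1
    simp⟩

/-- Right multiplication by `(0 p; 1 0)` on `Λ`, as a left `Λ`-linear map. -/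
noncomputable def rmul : Lam p →ₗ[Lam p] Lam p where
  toFun x := x * eMat p
  map_add' x y := add_mul x y (eMat p)
  map_smul' r x := by
    simp [smul_eq_mul, mul_assoc]

/-- The quotient map `Λ → M ⊕ N` given by reducing the two diagonal entries mod `p`. -/
noncomputable def quotMap : Lam p →ₗ[Lam p] (Mmod p × Nmod p) where
  toFun x := (PadicInt.toZMod (x.1 0 0), PadicInt.toZMod (x.1 1 1))
  map_add' x y := by simp; rfl
  map_smul' r x := by
    have h0 : ((r : Matrix (Fin 2) (Fin 2) ℤ_[p]) * x) 0 0
        = r.1 0 0 * x.1 0 0 + r.1 0 1 * x.1 1 0 := by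
      simp [Matrix.mul_apply, Fin.sum_univ_two]
    have h1 : ((r : Matrix (Fin 2) (Fin 2) ℤ_[p]) * x) 1 1
        = r.1 1 0 * x.1 0 1 + r.1 1 1 * x.1 1 1 := by
      simp [Matrix.mul_apply, Fin.sum_univ_two]
    obtain ⟨c, hc⟩ := r.2
    obtain ⟨c', hc'⟩ := x.2
    show (PadicInt.toZMod (((r : Matrix (Fin 2) (Fin 2) ℤ_[p]) * x) 0 0),
        PadicInt.toZMod (((r : Matrix (Fin 2) (Fin 2) ℤ_[p]) * x) 1 1))
      = (phiM p r * PadicInt.toZMod (x.1 0 0), phiN p r * PadicInt.toZMod (x.1 1 1))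
    rw [h0, h1, hc, hc']
    simp [phiM, phiN, ZMod.natCast_self]

lemma toZMod_zero_iff (x : ℤ_[p]) : PadicInt.toZMod x = 0 ↔ (p : ℤ_[p]) ∣ x := by
  rw [← RingHom.mem_ker, PadicInt.ker_toZMod, PadicInt.maximalIdeal_eq_span_p,
    Ideal.mem_span_singleton]

lemma rmul_coe (x : Lam p) :
    ((rmul p x : Lam p) : Matrix (Fin 2) (Fin 2) ℤ_[p]) =
      !![x.1 0 1, (p : ℤ_[p]) * x.1 0 0; x.1 1 1, (p : ℤ_[p]) * x.1 1 0] := by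
  show (x.1 * (eMat p).1) = _
  ext i j
  fin_cases i <;> fin_cases j <;>
    simp [eMat, Matrix.mul_apply, Fin.sum_univ_two, mul_comm]

/-- Example of a non-Fitting-additive hereditary order: with `Λ`, `M`, `N` as above,
right multiplication by `(0 p; 1 0)` yields a short exact sequence of left `Λ`-modules
`0 → Λ → Λ → M ⊕ N → 0`. -/
theorem ses_Lam :
    Function.Injective (rmul p) ∧ Function.Exact (rmul p) (quotMap p) ∧
      Function.Surjective (quotMap p) := by
  have hp0 : (p : ℤ_[p]) ≠ 0 := Nat.cast_ne_zero.mpr (Fact.out : p.Prime).ne_zero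
  refine ⟨?_, ?_, ?_⟩
  · intro x y hxy
    have h : ((rmul p x : Lam p) : Matrix (Fin 2) (Fin 2) ℤ_[p]) =
        ((rmul p y : Lam p) : Matrix (Fin 2) (Fin 2) ℤ_[p]) := by rw [hxy]
    rw [rmul_coe, rmul_coe] at h
    apply Subtype.ext
    ext i j
    fin_cases i <;> fin_cases j
    · have := congrFun (congrFun h 0) 1
      simpa using mul_left_cancel₀ hp0 (by simpa using this)
    · simpa using congrFun (congrFun h 0) 0
    · have := congrFun (congrFun h 1) 1
      simpa using mul_left_cancel₀ hp0 (by simpa using this)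
    · simpa using congrFun (congrFun h 1) 0
  · intro y
    constructor
    · intro hy
      have h0 : PadicInt.toZMod (y.1 0 0) = 0 := congrArg Prod.fst hy
      have h1 : PadicInt.toZMod (y.1 1 1) = 0 := congrArg Prod.snd hy
      obtain ⟨a, ha⟩ := (toZMod_zero_iff p _).mp h0
      obtain ⟨c, hc⟩ := (toZMod_zero_iff p _).mp h1
      obtain ⟨b, hb⟩ := y.2
      refine ⟨⟨!![b, y.1 0 0; c, y.1 1 0], ?_⟩, ?_⟩
      · show (p : ℤ_[p]) ∣ !![b, y.1 0 0; c, y.1 1 0] 0 1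
        simpa using ⟨a, ha⟩
      · apply Subtype.ext
        rw [rmul_coe]
        ext i j
        fin_cases i <;> fin_cases j <;> simp [← ha, ← hb, ← hc]
    · rintro ⟨x, rfl⟩
      obtain ⟨c, hc⟩ := x.2
      show (PadicInt.toZMod ((rmul p x).1 0 0), PadicInt.toZMod ((rmul p x).1 1 1))
        = (0, 0)
      rw [rmul_coe]
      refine Prod.ext ?_ ?_
      · simpa using (toZMod_zero_iff p _).mpr ⟨c, hc⟩
      · simp
  · rintro ⟨m, n⟩
    refine ⟨⟨!![((m : ZMod p).val : ℤ_[p]), 0; 0, ((n : ZMod p).val : ℤ_[p])], ?_⟩, ?_⟩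
    · show (p : ℤ_[p]) ∣ !![((m : ZMod p).val : ℤ_[p]), 0; 0, ((n : ZMod p).val : ℤ_[p])] 0 1
      simp
    · show (PadicInt.toZMod (((m : ZMod p).val : ℤ_[p])),
        PadicInt.toZMod (((n : ZMod p).val : ℤ_[p]))) = (m, n)
      simp [ZMod.natCast_val, ZMod.cast_id]
      haveI : NeZero p := ⟨(Fact.out : p.Prime).ne_zero⟩
      exact Prod.ext (ZMod.natCast_zmod_val (n := p) m) (ZMod.natCast_zmod_val (n := p) n)
end
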